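/- Let R be a Noetherian local ring and φ: R^m → R^n a map of free modules with m > n, such that the ideal I_n(φ) of maximal (n×n) minors has grade (depth) equal to m − n + 1 (the maximal possible). Then the kernel of φ is generated by the vectors of signed maximal minors obtained by the Eagon–Northcott construction; in the case m = n+1, ker φ is the free rank-1 module generated by the vector of signed n×n minors of the matrix of φ. -/
import Mathlib


open Matrix Pointwise

section Aux

variable {R : Type*} [CommRing R] {n : ℕ}

/-- The square matrix obtained by stacking the `i`-th standard basis row vector on
top of `A`. -/
private def stmt17D (A : Matrix (Fin n) (Fin (n + 1)) R) (i : Fin (n + 1)) :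
    Matrix (Fin (n + 1)) (Fin (n + 1)) R :=
  Matrix.of (Fin.cons (Pi.single i 1) (fun k => A k))

private lemma stmt17D_det (A : Matrix (Fin n) (Fin (n + 1)) R) (i : Fin (n + 1)) :
    (stmt17D A i).det = (-1 : R) ^ (i : ℕ) * (A.submatrix id i.succAbove).det := by
  rw [Matrix.det_succ_row_zero]
  rw [Finset.sum_eq_single i]
  · have h0 : stmt17D A i 0 i = 1 := by
      simp [stmt17D, Pi.single_apply]
    have hsub : (stmt17D A i).submatrix Fin.succ i.succAbove
        = A.submatrix id i.succAbove := by
      ext k l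
      simp [stmt17D]
    rw [h0, hsub]; ring
  · intro j _ hj
    have h0 : stmt17D A i 0 j = 0 := by
      simp [stmt17D, Pi.single_apply, hj]
    rw [h0]; ring
  · intro h; exact absurd (Finset.mem_univ i) h

private lemma stmt17D_adjugate (A : Matrix (Fin n) (Fin (n + 1)) R)
    (i j : Fin (n + 1)) :
    (stmt17D A i).adjugate j 0 = (stmt17D A j).det := by
  rw [Matrix.adjugate_apply]
  congr 1
  ext k l
  refine Fin.cases ?_ ?_ k
  · simp [stmt17D]
  · intro k
    rw [Matrix.updateRow_ne (Fin.succ_ne_zero k)]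
    simp [stmt17D]

/-- Laplace relation: the vector of signed maximal minors lies in the kernel. -/
private lemma stmt17_ker (A : Matrix (Fin n) (Fin (n + 1)) R) :
    A *ᵥ (fun j => (stmt17D A j).det) = 0 := by
  funext k
  have h := congrArg (fun M => M (Fin.succ k) 0) (Matrix.mul_adjugate (stmt17D A 0))
  simp only [Matrix.mul_apply, Matrix.smul_apply, Matrix.one_apply,
    Fin.succ_ne_zero k, if_false, smul_zero] at h
  calc (A *ᵥ fun j => (stmt17D A j).det) k
      = ∑ j, stmt17D A 0 (Fin.succ k) j * (stmt17D A 0).adjugate j 0 := by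
        simp only [Matrix.mulVec, dotProduct]
        refine Finset.sum_congr rfl fun j _ => ?_
        rw [stmt17D_adjugate]
        have : stmt17D A 0 (Fin.succ k) j = A k j := by simp [stmt17D]
        rw [this]
    _ = 0 := h

/-- Cross relation: for any `v` in the kernel, `(det Dᵢ) • v = vᵢ • (det D·)`. -/
private lemma stmt17_cross (A : Matrix (Fin n) (Fin (n + 1)) R)
    {v : Fin (n + 1) → R} (hv : A *ᵥ v = 0) (i j : Fin (n + 1)) :
    (stmt17D A i).det * v j = v i * (stmt17D A j).det := by
  have hDv : stmt17D A i *ᵥ v = Pi.single 0 (v i) := by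
    funext k
    refine Fin.cases ?_ ?_ k
    · simp only [Matrix.mulVec, dotProduct, stmt17D]
      simp only [Matrix.of_apply, Fin.cons_zero]
      rw [Pi.single_apply 0 (v i) 0, if_pos rfl]
      rw [Finset.sum_congr rfl (fun l _ => by
        rw [Pi.single_apply i (1 : R) l, ite_mul, one_mul, zero_mul])]
      simp [Finset.sum_ite_eq' Finset.univ i v]
    · intro k
      have : (stmt17D A i *ᵥ v) (Fin.succ k) = (A *ᵥ v) k := by
        simp only [Matrix.mulVec, dotProduct, stmt17D]
        refine Finset.sum_congr rfl fun l _ => ?_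
        simp
      rw [this, hv, Pi.single_apply]
      simp [(Fin.succ_ne_zero k)]
  have h1 : (stmt17D A i).adjugate *ᵥ (stmt17D A i *ᵥ v)
      = (stmt17D A i).det • v := by
    rw [Matrix.mulVec_mulVec, Matrix.adjugate_mul, Matrix.smul_mulVec,
      Matrix.one_mulVec]
  have h2 := congrFun h1 j
  rw [hDv] at h2
  have h3 : ((stmt17D A i).adjugate *ᵥ Pi.single 0 (v i)) j
      = (stmt17D A j).det * v i := by
    simp only [Matrix.mulVec, dotProduct]
    rw [Finset.sum_congr rfl (fun l _ => by
      rw [Pi.single_apply 0 (v i) l, mul_ite, mul_zero])]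
    rw [Finset.sum_ite_eq' Finset.univ (0 : Fin (n + 1))]
    simp [stmt17D_adjugate]
  rw [h3] at h2
  have := h2.symm
  simpa [mul_comm] using this

end Aux

/-- Eagon–Northcott, case `m = n+1`: if `φ : R^{n+1} → R^n` is
given by an `n×(n+1)` matrix `A` over a Noetherian local ring and the ideal of
maximal `n×n` minors has grade `2` (the maximal possible, witnessed by a regular
sequence of length `2` inside it), then `ker φ` is the free rank-1 module
generated by the vector of signed maximal minors. -/
theorem stmt17 {R : Type*} [CommRing R] [IsNoetherianRing R] [IsLocalRing R]
    (n : ℕ) (A : Matrix (Fin n) (Fin (n + 1)) R)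
    (w : Fin (n + 1) → R)
    (hw : ∀ i, w i = (-1 : R) ^ (i : ℕ) * (A.submatrix id i.succAbove).det)
    (hgrade : ∃ a b : R,
      a ∈ Ideal.span (Set.range fun i : Fin (n + 1) => (A.submatrix id i.succAbove).det) ∧
      b ∈ Ideal.span (Set.range fun i : Fin (n + 1) => (A.submatrix id i.succAbove).det) ∧
      RingTheory.Sequence.IsRegular R [a, b]) :
    LinearMap.ker A.mulVecLin = Submodule.span R {w} := by
  -- `w` agrees with the determinants of the stacked matrices
  have hwD : ∀ i, w i = (stmt17D A i).det := fun i => by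
    rw [hw i, stmt17D_det]
  obtain ⟨a, b, ha, hb, hreg⟩ := hgrade
  -- extract regularity facts
  have hwreg := hreg.toIsWeaklyRegular
  rw [RingTheory.Sequence.isWeaklyRegular_cons_iff] at hwreg
  obtain ⟨hareg, hwreg'⟩ := hwreg
  rw [RingTheory.Sequence.isWeaklyRegular_cons_iff] at hwreg'
  obtain ⟨hbreg, -⟩ := hwreg'
  -- `a` is a nonzerodivisor
  have ha_nzd : ∀ x : R, a * x = 0 → x = 0 := by
    intro x hx
    have h0 : a • x = a • (0 : R) := by simpa [smul_eq_mul] using hx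
    exact hareg h0
  -- `b` is a nonzerodivisor mod `(a)`
  -- write `a` and `b` as combinations of the minors
  rw [Ideal.span, Submodule.mem_span_range_iff_exists_fun] at ha hb
  obtain ⟨c, hc⟩ := ha
  obtain ⟨d, hd⟩ := hb
  apply le_antisymm
  · -- kernel ⊆ span {w}
    intro v hv
    rw [LinearMap.mem_ker, Matrix.mulVecLin_apply] at hv
    have hcross : ∀ i j, w i * v j = v i * w j := by
      intro i j
      rw [hwD i, hwD j]
      exact stmt17_cross A hv i j
    -- minors in terms of w : det (D i) = w i, and the minor itself is `(-1)^i * w i`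
    have hminor : ∀ i : Fin (n + 1),
        (A.submatrix id i.succAbove).det = (-1 : R) ^ (i : ℕ) * w i := by
      intro i
      rw [hw i, ← mul_assoc, ← pow_add, ← two_mul, pow_mul]
      simp
    set ta : R := ∑ i, c i * ((-1 : R) ^ (i : ℕ) * v i) with hta
    set tb : R := ∑ i, d i * ((-1 : R) ^ (i : ℕ) * v i) with htb
    have hav : ∀ j, a * v j = ta * w j := by
      intro j
      rw [← hc, hta, Finset.sum_mul, Finset.sum_mul]
      refine Finset.sum_congr rfl fun i _ => ?_
      rw [smul_eq_mul, hminor i]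
      calc c i * ((-1 : R) ^ (i : ℕ) * w i) * v j
          = c i * (-1 : R) ^ (i : ℕ) * (w i * v j) := by ring
        _ = c i * (-1 : R) ^ (i : ℕ) * (v i * w j) := by rw [hcross]
        _ = c i * ((-1 : R) ^ (i : ℕ) * v i) * w j := by ring
    have hbv : ∀ j, b * v j = tb * w j := by
      intro j
      rw [← hd, htb, Finset.sum_mul, Finset.sum_mul]
      refine Finset.sum_congr rfl fun i _ => ?_
      rw [smul_eq_mul, hminor i]
      calc d i * ((-1 : R) ^ (i : ℕ) * w i) * v j
          = d i * (-1 : R) ^ (i : ℕ) * (w i * v j) := by ring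
        _ = d i * (-1 : R) ^ (i : ℕ) * (v i * w j) := by rw [hcross]
        _ = d i * ((-1 : R) ^ (i : ℕ) * v i) * w j := by ring
    -- (b * ta - a * tb) * w j = 0 for all j
    have hkill : ∀ j, (b * ta - a * tb) * w j = 0 := by
      intro j
      have h1 : b * (a * v j) = b * (ta * w j) := by rw [hav]
      have h2 : a * (b * v j) = a * (tb * w j) := by rw [hbv]
      have : b * (ta * w j) = a * (tb * w j) := by
        rw [← h1, ← h2]; ring
      calc (b * ta - a * tb) * w j
          = b * (ta * w j) - a * (tb * w j) := by ring
        _ = 0 := by rw [this]; ring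
    -- hence (b * ta - a * tb) * a = 0, so b * ta = a * tb
    have hba : (b * ta - a * tb) * a = 0 := by
      nth_rewrite 2 [← hc]
      rw [Finset.mul_sum]
      refine Finset.sum_eq_zero fun i _ => ?_
      rw [smul_eq_mul, hminor i]
      calc (b * ta - a * tb) * (c i * ((-1 : R) ^ (i : ℕ) * w i))
          = c i * (-1 : R) ^ (i : ℕ) * ((b * ta - a * tb) * w i) := by ring
        _ = 0 := by rw [hkill]; ring
    have hbata : b * ta = a * tb := by
      have h0 : a * (b * ta - a * tb) = 0 := by rw [mul_comm]; exact hba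
      exact sub_eq_zero.mp (ha_nzd _ h0)
    -- use regularity of b mod (a) to get ta ∈ (a)
    have hta_mem : ta ∈ (a • (⊤ : Submodule R R)) := by
      have hmk : b • (Submodule.Quotient.mk ta :
          R ⧸ (a • (⊤ : Submodule R R))) = b • (Submodule.Quotient.mk 0) := by
        rw [← Submodule.Quotient.mk_smul, ← Submodule.Quotient.mk_smul]
        rw [Submodule.Quotient.eq]
        have : b • ta - b • (0 : R) = a • tb := by
          simp [smul_eq_mul, hbata]
        rw [this]
        exact Submodule.smul_mem_pointwise_smul tb a ⊤ trivial
      have := hbreg hmk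
      rwa [Submodule.Quotient.eq, sub_zero] at this
    obtain ⟨s, -, hs⟩ := Submodule.mem_map.mp hta_mem
    -- now v = s • w
    have hveq : v = s • w := by
      funext j
      have h1 : a * v j = a * (s * w j) := by
        rw [hav j]
        have : ta = a * s := by
          rw [← hs]; simp [smul_eq_mul, mul_comm]
        rw [this]; ring
      have := ha_nzd (v j - s * w j) (by rw [mul_sub, h1]; ring)
      have := sub_eq_zero.mp this
      simpa using this
    rw [hveq]
    exact Submodule.smul_mem _ s (Submodule.mem_span_singleton_self w)
  · -- span {w} ⊆ kernel
    rw [Submodule.span_le, Set.singleton_subset_iff]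
    rw [SetLike.mem_coe, LinearMap.mem_ker, Matrix.mulVecLin_apply]
    have : w = fun j => (stmt17D A j).det := funext hwD
    rw [this]
    exact stmt17_ker A
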